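/- Let n ≥ 3 and let f be a function defined on the n-cycle marginal scenario C_n (all singletons {i}, all consecutive pairs {i,i+1} with indices mod n, and ∅) satisfying: f(∅)=0, f({i}) ≥ 0, f({i}) ≤ f({i,i+1}), f({i+1}) ≤ f({i,i+1}), f({i,i+1}) ≤ f({i})+f({i+1}) for all i, and the n cycle inequalities f({i,i+1}) + Σ_{j≠i,i+1} f({j}) ≤ Σ_{j≠i} f({j,j+1}) for all i. Then f extends to a polymatroid on 2^{[n]}, i.e., there is a polymatroid g : 2^{[n]} → ℝ with g(S) = f(S) for all S ∈ C_n. -/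

import Mathlib

set_option maxHeartbeats 1000000

open Finset

namespace NCyc

/-- classical indicator of a proposition -/
noncomputable def ind (P : Prop) : ℝ := @ite ℝ P (Classical.propDecidable P) 1 0

lemma ind_of {P : Prop} (h : P) : ind P = 1 := by simp [ind, h]
lemma ind_not {P : Prop} (h : ¬P) : ind P = 0 := by simp [ind, h]
lemma ind_nonneg (P : Prop) : 0 ≤ ind P := by
  by_cases h : P
  · rw [ind_of h]; norm_num
  · rw [ind_not h]
lemma ind_le_one (P : Prop) : ind P ≤ 1 := by
  by_cases h : P
  · rw [ind_of h]
  · rw [ind_not h]; norm_num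
lemma ind_mono {P Q : Prop} (h : P → Q) : ind P ≤ ind Q := by
  by_cases hP : P
  · rw [ind_of hP, ind_of (h hP)]
  · rw [ind_not hP]; exact ind_nonneg Q
lemma ind_congr {P Q : Prop} (h : P ↔ Q) : ind P = ind Q := by
  by_cases hP : P
  · rw [ind_of hP, ind_of (h.mp hP)]
  · rw [ind_not hP, ind_not (fun hq => hP (h.mpr hq))]
lemma ind_submod {PS PT PI PU : Prop} (hI : PI → PS ∧ PT) (hU : PU → PS ∨ PT) :
    ind PI + ind PU ≤ ind PS + ind PT := by
  by_cases hi : PI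
  · obtain ⟨hs, ht⟩ := hI hi
    rw [ind_of hi, ind_of hs, ind_of ht]
    have := ind_le_one PU; linarith
  · rw [ind_not hi]
    by_cases hu : PU
    · rcases hU hu with h | h
      · rw [ind_of hu, ind_of h]; have := ind_nonneg PT; linarith
      · rw [ind_of hu, ind_of h]; have := ind_nonneg PS; linarith
    · rw [ind_not hu]; have := ind_nonneg PS; have := ind_nonneg PT; linarith
lemma ind_or (P Q : Prop) : ind (P ∨ Q) = ind P + ind Q - ind (P ∧ Q) := by
  by_cases hP : P <;> by_cases hQ : Q <;> simp [ind, hP, hQ]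

/-- edge-demand excess of window [u,v] -/
noncomputable def Ef (a d : ℕ → ℝ) (u v : ℕ) : ℝ :=
  (∑ j ∈ Ico u v, d j) - ∑ k ∈ Ico (u+1) v, a k

/-- truncated excess, with range guard -/
noncomputable def Mf (n : ℕ) (a d : ℕ → ℝ) (u v : ℕ) : ℝ :=
  if 1 ≤ u ∧ u < v ∧ v ≤ n then max 0 (Ef a d u v) else 0

/-- interval weights: double difference of Mf -/
noncomputable def wf (n : ℕ) (a d : ℕ → ℝ) (u v : ℕ) : ℝ :=
  Mf n a d u v - Mf n a d (u-1) v - (Mf n a d u (v+1) - Mf n a d (u-1) (v+1))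

/-- total load at vertex k -/
noncomputable def Lf (n : ℕ) (a d : ℕ → ℝ) (k : ℕ) : ℝ :=
  Mf n a d (k-1) k + (Mf n a d k (k+1) - Mf n a d (k-1) (k+1))

/-- private part at vertex k -/
noncomputable def pf (n : ℕ) (a d : ℕ → ℝ) (k : ℕ) : ℝ := a k - Lf n a d k

/-- the extension polymatroid -/
noncomputable def gf (n : ℕ) (a d : ℕ → ℝ) (t : ℝ) {α : Type*} (ν : ℕ → α)
    (S : Finset α) : ℝ :=
  t * ind (S.Nonempty)
  + ∑ k ∈ Ico 1 (n+1), pf n a d k * ind (ν k ∈ S)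
  + ∑ u ∈ Ico 1 (n+1), ∑ v ∈ Ico (u+1) (n+1),
      wf n a d u v * ind (∃ l, l ∈ Icc u v ∧ ν l ∈ S)

section Basic

variable {n : ℕ} {a d : ℕ → ℝ}

lemma Mf_eq {u v : ℕ} (h1 : 1 ≤ u) (h2 : u < v) (h3 : v ≤ n) :
    Mf n a d u v = max 0 (Ef a d u v) := if_pos ⟨h1, h2, h3⟩

lemma Mf_out {u v : ℕ} (h : ¬(1 ≤ u ∧ u < v ∧ v ≤ n)) : Mf n a d u v = 0 := if_neg h

lemma Mf_nonneg (u v : ℕ) : 0 ≤ Mf n a d u v := by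
  unfold Mf; split
  · exact le_max_left 0 _
  · exact le_rfl

lemma Ico_single (x : ℕ) : Ico x (x+1) = ({x} : Finset ℕ) := by
  ext y; simp only [mem_Ico, Finset.mem_singleton]; omega

lemma Ef_right {u v : ℕ} (h : u < v) :
    Ef a d u (v+1) = Ef a d u v + d v - a v := by
  unfold Ef
  rw [Finset.sum_Ico_succ_top (le_of_lt h), Finset.sum_Ico_succ_top (by omega : u+1 ≤ v)]
  ring

lemma Ef_left {u v : ℕ} (h : u + 1 < v) :
    Ef a d u v = Ef a d (u+1) v + d u - a (u+1) := by
  unfold Ef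
  rw [Finset.sum_eq_sum_Ico_succ_bot (by omega : u < v) d,
    Finset.sum_eq_sum_Ico_succ_bot h a]
  ring

lemma Ef_adj {u : ℕ} : Ef a d u (u+1) = d u := by
  unfold Ef
  rw [Ico_single, Finset.sum_singleton, Finset.Ico_self, Finset.sum_empty, sub_zero]

lemma Mf_adj {x : ℕ} (hd0 : 0 ≤ d x) (hx : 1 ≤ x) (hx' : x + 1 ≤ n) :
    Mf n a d x (x+1) = d x := by
  rw [Mf_eq hx (by omega) hx', Ef_adj]
  exact max_eq_right hd0

lemma max_sub {A P Q C : ℝ} (hP : P ≤ A) (hQ : Q ≤ A) (hm : A + C = P + Q) :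
    max 0 P + max 0 Q ≤ max 0 A + max 0 C := by
  rcases le_or_gt P 0 with h1 | h1
  · rw [max_eq_left h1]
    have h3 := max_le_max (le_refl (0:ℝ)) hQ
    have h4 := le_max_left (0:ℝ) C
    linarith
  · rcases le_or_gt Q 0 with h2 | h2
    · rw [max_eq_left h2]
      have h3 := max_le_max (le_refl (0:ℝ)) hP
      have h4 := le_max_left (0:ℝ) C
      linarith
    · rw [max_eq_right h1.le, max_eq_right h2.le]
      have h3 := le_max_right (0:ℝ) A
      have h4 := le_max_right (0:ℝ) C
      linarith

lemma wf_nonneg (hda : ∀ j, d j ≤ a j) (hda' : ∀ j, d j ≤ a (j+1))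
    {u v : ℕ} (hu : 1 ≤ u) (huv : u < v) (hv : v ≤ n) : 0 ≤ wf n a d u v := by
  unfold wf
  rcases eq_or_lt_of_le hu with h1 | h1
  · -- u = 1
    have hu1 : u = 1 := h1.symm
    subst hu1
    rw [show Mf n a d (1-1) v = 0 from Mf_out (by omega),
      show Mf n a d (1-1) (v+1) = 0 from Mf_out (by omega)]
    rcases eq_or_lt_of_le hv with h2 | h2
    · -- v = n
      subst h2
      rw [show Mf v a d 1 (v+1) = 0 from Mf_out (by omega)]
      have := Mf_nonneg (n := v) (a := a) (d := d) 1 v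
      linarith
    · -- v < n
      rw [Mf_eq le_rfl huv hv, Mf_eq le_rfl (by omega) h2,
        Ef_right (by omega : 1 < v)]
      have h5 := hda v
      have h6 := max_le_max (le_refl (0:ℝ))
        (show Ef a d 1 v + d v - a v ≤ Ef a d 1 v by linarith)
      linarith
  · -- 1 < u
    have hsub : u - 1 + 1 = u := by omega
    rcases eq_or_lt_of_le hv with h2 | h2
    · -- v = n
      subst h2
      rw [show Mf v a d u (v+1) = 0 from Mf_out (by omega),
        show Mf v a d (u-1) (v+1) = 0 from Mf_out (by omega),
        Mf_eq hu huv le_rfl, Mf_eq (by omega) (by omega) le_rfl]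
      have hEl : Ef a d (u-1) v = Ef a d u v + d (u-1) - a u := by
        have h7 := Ef_left (a := a) (d := d) (u := u - 1) (v := v) (by omega)
        rw [hsub] at h7; exact h7
      have h5 := hda' (u-1)
      rw [hsub] at h5
      have h6 := max_le_max (le_refl (0:ℝ))
        (show Ef a d (u-1) v ≤ Ef a d u v by rw [hEl]; linarith)
      linarith
    · -- v < n : interior case
      rw [Mf_eq hu huv hv, Mf_eq (by omega) (by omega) hv,
        Mf_eq hu (by omega) h2, Mf_eq (by omega) (by omega) h2]
      have hQ : Ef a d u (v+1) = Ef a d u v + d v - a v := Ef_right huv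
      have hP : Ef a d (u-1) v = Ef a d u v + d (u-1) - a u := by
        have h7 := Ef_left (a := a) (d := d) (u := u - 1) (v := v) (by omega)
        rw [hsub] at h7; exact h7
      have hC : Ef a d (u-1) (v+1) = Ef a d (u-1) v + d v - a v :=
        Ef_right (by omega)
      have h5 := hda' (u-1)
      rw [hsub] at h5
      have h6 := hda v
      have h8 := max_sub (A := Ef a d u v) (P := Ef a d (u-1) v) (Q := Ef a d u (v+1))
        (C := Ef a d (u-1) (v+1)) (by linarith) (by linarith) (by linarith)
      linarith

lemma pf_nonneg (hn : 3 ≤ n) (hd0 : ∀ j, 0 ≤ d j) (hda : ∀ j, d j ≤ a j)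
    (hda' : ∀ j, d j ≤ a (j+1)) {k : ℕ} (hk1 : 1 ≤ k) (hk2 : k ≤ n) :
    0 ≤ pf n a d k := by
  unfold pf Lf
  rcases eq_or_lt_of_le hk1 with h1 | h1
  · -- k = 1
    have hk : k = 1 := h1.symm
    subst hk
    rw [show Mf n a d (1-1) 1 = 0 from Mf_out (by omega),
      show Mf n a d (1-1) (1+1) = 0 from Mf_out (by omega),
      Mf_adj (hd0 1) le_rfl (by omega)]
    have := hda 1
    linarith
  · rcases eq_or_lt_of_le hk2 with h2 | h2
    · -- k = n
      subst h2
      have hsub : k - 1 + 1 = k := by omega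
      rw [show Mf k a d k (k+1) = 0 from Mf_out (by omega),
        show Mf k a d (k-1) (k+1) = 0 from Mf_out (by omega)]
      have hadj : Mf k a d (k-1) k = d (k-1) := by
        have h7 := Mf_adj (n := k) (a := a) (d := d) (x := k-1) (hd0 (k-1)) (by omega)
          (by omega)
        rw [hsub] at h7; exact h7
      rw [hadj]
      have h5 := hda' (k-1)
      rw [hsub] at h5
      linarith
    · -- 1 < k < n
      have hsub : k - 1 + 1 = k := by omega
      have hadj1 : Mf n a d (k-1) k = d (k-1) := by
        have h7 := Mf_adj (n := n) (a := a) (d := d) (x := k-1) (hd0 (k-1)) (by omega)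
          (by omega)
        rw [hsub] at h7; exact h7
      have hadj2 : Mf n a d k (k+1) = d k := Mf_adj (hd0 k) (by omega) (by omega)
      have hE : Ef a d (k-1) (k+1) = d (k-1) + d k - a k := by
        have e1 : Ef a d (k-1) (k+1) = Ef a d (k-1) k + d k - a k := Ef_right (by omega)
        have e2 : Ef a d (k-1) k = d (k-1) := by
          have e3 : Ef a d (k-1) (k-1+1) = d (k-1) := Ef_adj
          rw [hsub] at e3; exact e3
        rw [e1, e2]
      rw [hadj1, hadj2, Mf_eq (by omega) (by omega) (by omega), hE]
      have := le_max_right 0 (d (k-1) + d k - a k)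
      linarith

lemma tele (F : ℕ → ℝ) (x y : ℕ) (h : x ≤ y) :
    ∑ j ∈ Ico x y, (F j - F (j+1)) = F x - F y := by
  rw [Finset.sum_Ico_eq_sum_range]
  have h2 : x + (y - x) = y := by omega
  have h3 := Finset.sum_range_sub' (fun i => F (x + i)) (y - x)
  simp only [← Nat.add_assoc] at h3
  rw [h3, Nat.add_zero, h2]

lemma sumv (u V0 : ℕ) (hV0 : V0 ≤ n + 1) :
    ∑ v ∈ Ico V0 (n+1), wf n a d u v = Mf n a d u V0 - Mf n a d (u-1) V0 := by
  have ht := tele (fun v => Mf n a d u v - Mf n a d (u-1) v) V0 (n+1) hV0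
  have hb : ∀ x, Mf n a d x (n+1) = 0 := fun x => Mf_out (by omega)
  calc ∑ v ∈ Ico V0 (n+1), wf n a d u v
      = ∑ v ∈ Ico V0 (n+1), ((Mf n a d u v - Mf n a d (u-1) v)
          - (Mf n a d u (v+1) - Mf n a d (u-1) (v+1))) := rfl
    _ = (Mf n a d u V0 - Mf n a d (u-1) V0)
          - (Mf n a d u (n+1) - Mf n a d (u-1) (n+1)) := ht
    _ = Mf n a d u V0 - Mf n a d (u-1) V0 := by rw [hb, hb]; ring

lemma sumu (x y : ℕ) :
    ∑ u ∈ Ico 1 (x+1), (Mf n a d u y - Mf n a d (u-1) y) = Mf n a d x y := by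
  rw [Finset.sum_Ico_eq_sum_range]
  simp only [Nat.add_sub_cancel]
  have h2 := Finset.sum_range_sub (fun i => Mf n a d i y) x
  have h3 : ∀ i, Mf n a d (1 + i) y - Mf n a d (1 + i - 1) y
      = Mf n a d (i+1) y - Mf n a d i y := by
    intro i
    rw [Nat.add_comm 1 i, Nat.add_sub_cancel]
  rw [Finset.sum_congr rfl (fun i _ => h3 i), h2,
    show Mf n a d 0 y = 0 from Mf_out (by omega)]
  ring

lemma inner_eval {u thr : ℕ} (hu : 1 ≤ u) (hthr : u < thr) (hthr2 : thr ≤ n+1)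
    (F : ℕ → Prop) (hF : ∀ v, u < v → (F v ↔ thr ≤ v)) :
    ∑ v ∈ Ico (u+1) (n+1), wf n a d u v * ind (F v)
      = Mf n a d u thr - Mf n a d (u-1) thr := by
  have step : ∀ v, u < v → wf n a d u v * ind (F v) = if thr ≤ v then wf n a d u v else 0 := by
    intro v hv
    by_cases h : thr ≤ v
    · rw [ind_of ((hF v hv).mpr h), if_pos h, mul_one]
    · rw [ind_not (fun hf => h ((hF v hv).mp hf)), if_neg h, mul_zero]
  rw [Finset.sum_congr rfl (fun v hv => step v (by rw [mem_Ico] at hv; omega)),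
    ← Finset.sum_filter]
  have hf : (Ico (u+1) (n+1)).filter (fun v => thr ≤ v) = Ico thr (n+1) := by
    ext v; simp only [mem_filter, mem_Ico]; omega
  rw [hf]
  exact sumv u thr hthr2

lemma T2 {x y : ℕ} (hx : 1 ≤ x) (hxy : x < y) (hy : y ≤ n) :
    ∑ u ∈ Ico 1 (n+1), ∑ v ∈ Ico (u+1) (n+1),
        wf n a d u v * ind (u ≤ x ∧ y ≤ v) = Mf n a d x y := by
  rw [← Finset.sum_Ico_consecutive _ (show 1 ≤ x+1 by omega) (show x+1 ≤ n+1 by omega)]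
  have hzero : ∑ u ∈ Ico (x+1) (n+1), ∑ v ∈ Ico (u+1) (n+1),
      wf n a d u v * ind (u ≤ x ∧ y ≤ v) = 0 := by
    apply Finset.sum_eq_zero
    intro u hu
    apply Finset.sum_eq_zero
    intro v hv
    rw [mem_Ico] at hu
    rw [ind_not (by omega : ¬(u ≤ x ∧ y ≤ v)), mul_zero]
  have hmain : ∑ u ∈ Ico 1 (x+1), ∑ v ∈ Ico (u+1) (n+1),
      wf n a d u v * ind (u ≤ x ∧ y ≤ v) = Mf n a d x y := by
    have hcong : ∀ u ∈ Ico 1 (x+1), ∑ v ∈ Ico (u+1) (n+1),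
        wf n a d u v * ind (u ≤ x ∧ y ≤ v)
          = Mf n a d u y - Mf n a d (u-1) y := by
      intro u hu
      rw [mem_Ico] at hu
      exact inner_eval hu.1 (by omega) (by omega) _
        (fun v _ => ⟨fun h => h.2, fun h => ⟨by omega, h⟩⟩)
    rw [Finset.sum_congr rfl hcong]
    exact sumu x y
  rw [hmain, hzero, add_zero]

lemma T1 {k : ℕ} (hk1 : 1 ≤ k) (hk2 : k ≤ n) :
    ∑ u ∈ Ico 1 (n+1), ∑ v ∈ Ico (u+1) (n+1),
        wf n a d u v * ind (u ≤ k ∧ k ≤ v) = Lf n a d k := by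
  rw [← Finset.sum_Ico_consecutive _ (show 1 ≤ k+1 by omega) (show k+1 ≤ n+1 by omega)]
  have hzero : ∑ u ∈ Ico (k+1) (n+1), ∑ v ∈ Ico (u+1) (n+1),
      wf n a d u v * ind (u ≤ k ∧ k ≤ v) = 0 := by
    apply Finset.sum_eq_zero
    intro u hu
    apply Finset.sum_eq_zero
    intro v hv
    rw [mem_Ico] at hu
    rw [ind_not (by omega : ¬(u ≤ k ∧ k ≤ v)), mul_zero]
  rw [hzero, add_zero, Finset.sum_Ico_succ_top hk1]
  have hpiece2 : ∑ v ∈ Ico (k+1) (n+1), wf n a d k v * ind (k ≤ k ∧ k ≤ v)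
      = Mf n a d k (k+1) - Mf n a d (k-1) (k+1) := by
    exact inner_eval hk1 (by omega) (by omega) _
      (fun v hv => ⟨fun h => by omega, fun h => ⟨le_rfl, by omega⟩⟩)
  have hpiece1 : ∑ u ∈ Ico 1 k, ∑ v ∈ Ico (u+1) (n+1),
      wf n a d u v * ind (u ≤ k ∧ k ≤ v) = Mf n a d (k-1) k := by
    have hcong : ∀ u ∈ Ico 1 k, ∑ v ∈ Ico (u+1) (n+1),
        wf n a d u v * ind (u ≤ k ∧ k ≤ v) = Mf n a d u k - Mf n a d (u-1) k := by
      intro u hu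
      rw [mem_Ico] at hu
      exact inner_eval hu.1 (by omega) (by omega) _
        (fun v _ => ⟨fun h => h.2, fun h => ⟨by omega, h⟩⟩)
    rw [Finset.sum_congr rfl hcong]
    have := sumu (n := n) (a := a) (d := d) (k-1) k
    rw [show k - 1 + 1 = k by omega] at this
    exact this
  rw [hpiece1, hpiece2]
  rfl

section GF

variable {n : ℕ} {a d : ℕ → ℝ} {t : ℝ} {α : Type*} {ν : ℕ → α}

lemma gf_empty : gf n a d t ν (∅ : Finset α) = 0 := by
  unfold gf
  rw [ind_not (by simp : ¬(∅ : Finset α).Nonempty), mul_zero,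
    Finset.sum_eq_zero (fun k _ => by
      rw [ind_not (by simp : ν k ∉ (∅ : Finset α)), mul_zero]),
    Finset.sum_eq_zero (fun u _ => Finset.sum_eq_zero (fun v _ => by
      rw [ind_not (by simp : ¬∃ l, l ∈ Icc u v ∧ ν l ∈ (∅ : Finset α)), mul_zero]))]
  ring

lemma gf_nonneg (hn : 3 ≤ n) (ht : 0 ≤ t) (hd0 : ∀ j, 0 ≤ d j)
    (hda : ∀ j, d j ≤ a j) (hda' : ∀ j, d j ≤ a (j+1)) (S : Finset α) :
    0 ≤ gf n a d t ν S := by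
  unfold gf
  have hp1 : 0 ≤ t * ind S.Nonempty := mul_nonneg ht (ind_nonneg _)
  have hp2 : 0 ≤ ∑ k ∈ Ico 1 (n+1), pf n a d k * ind (ν k ∈ S) := by
    apply Finset.sum_nonneg
    intro k hk
    rw [mem_Ico] at hk
    exact mul_nonneg (pf_nonneg hn hd0 hda hda' hk.1 (by omega)) (ind_nonneg _)
  have hp3 : 0 ≤ ∑ u ∈ Ico 1 (n+1), ∑ v ∈ Ico (u+1) (n+1),
      wf n a d u v * ind (∃ l, l ∈ Icc u v ∧ ν l ∈ S) := by
    apply Finset.sum_nonneg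
    intro u hu
    apply Finset.sum_nonneg
    intro v hv
    rw [mem_Ico] at hu hv
    exact mul_nonneg (wf_nonneg hda hda' hu.1 (by omega) (by omega)) (ind_nonneg _)
  linarith

lemma gf_mono (hn : 3 ≤ n) (ht : 0 ≤ t) (hd0 : ∀ j, 0 ≤ d j)
    (hda : ∀ j, d j ≤ a j) (hda' : ∀ j, d j ≤ a (j+1)) {S T : Finset α}
    (hST : S ⊆ T) : gf n a d t ν S ≤ gf n a d t ν T := by
  unfold gf
  have hp1 : t * ind S.Nonempty ≤ t * ind T.Nonempty :=
    mul_le_mul_of_nonneg_left (ind_mono (fun ⟨x, hx⟩ => ⟨x, hST hx⟩)) ht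
  have hp2 : ∑ k ∈ Ico 1 (n+1), pf n a d k * ind (ν k ∈ S)
      ≤ ∑ k ∈ Ico 1 (n+1), pf n a d k * ind (ν k ∈ T) := by
    apply Finset.sum_le_sum
    intro k hk
    rw [mem_Ico] at hk
    exact mul_le_mul_of_nonneg_left (ind_mono (fun h => hST h))
      (pf_nonneg hn hd0 hda hda' hk.1 (by omega))
  have hp3 : ∑ u ∈ Ico 1 (n+1), ∑ v ∈ Ico (u+1) (n+1),
        wf n a d u v * ind (∃ l, l ∈ Icc u v ∧ ν l ∈ S)
      ≤ ∑ u ∈ Ico 1 (n+1), ∑ v ∈ Ico (u+1) (n+1),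
        wf n a d u v * ind (∃ l, l ∈ Icc u v ∧ ν l ∈ T) := by
    apply Finset.sum_le_sum
    intro u hu
    apply Finset.sum_le_sum
    intro v hv
    rw [mem_Ico] at hu hv
    exact mul_le_mul_of_nonneg_left
      (ind_mono (fun ⟨l, hl, hm⟩ => ⟨l, hl, hST hm⟩))
      (wf_nonneg hda hda' hu.1 (by omega) (by omega))
  linarith

lemma gf_submod [DecidableEq α] (hn : 3 ≤ n) (ht : 0 ≤ t) (hd0 : ∀ j, 0 ≤ d j)
    (hda : ∀ j, d j ≤ a j) (hda' : ∀ j, d j ≤ a (j+1)) (S T : Finset α) :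
    gf n a d t ν (S ∩ T) + gf n a d t ν (S ∪ T)
      ≤ gf n a d t ν S + gf n a d t ν T := by
  unfold gf
  have hp1 : t * ind (S ∩ T).Nonempty + t * ind (S ∪ T).Nonempty
      ≤ t * ind S.Nonempty + t * ind T.Nonempty := by
    rw [← mul_add, ← mul_add]
    refine mul_le_mul_of_nonneg_left (ind_submod ?_ ?_) ht
    · rintro ⟨x, hx⟩
      rw [mem_inter] at hx
      exact ⟨⟨x, hx.1⟩, ⟨x, hx.2⟩⟩
    · rintro ⟨x, hx⟩
      rw [mem_union] at hx
      exact hx.imp (fun h => ⟨x, h⟩) (fun h => ⟨x, h⟩)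
  have hp2 : (∑ k ∈ Ico 1 (n+1), pf n a d k * ind (ν k ∈ S ∩ T))
        + ∑ k ∈ Ico 1 (n+1), pf n a d k * ind (ν k ∈ S ∪ T)
      ≤ (∑ k ∈ Ico 1 (n+1), pf n a d k * ind (ν k ∈ S))
        + ∑ k ∈ Ico 1 (n+1), pf n a d k * ind (ν k ∈ T) := by
    rw [← Finset.sum_add_distrib, ← Finset.sum_add_distrib]
    apply Finset.sum_le_sum
    intro k hk
    rw [mem_Ico] at hk
    rw [← mul_add, ← mul_add]
    refine mul_le_mul_of_nonneg_left (ind_submod ?_ ?_)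
      (pf_nonneg hn hd0 hda hda' hk.1 (by omega))
    · intro h; rw [mem_inter] at h; exact h
    · intro h; rw [mem_union] at h; exact h
  have hp3 : (∑ u ∈ Ico 1 (n+1), ∑ v ∈ Ico (u+1) (n+1),
          wf n a d u v * ind (∃ l, l ∈ Icc u v ∧ ν l ∈ S ∩ T))
        + ∑ u ∈ Ico 1 (n+1), ∑ v ∈ Ico (u+1) (n+1),
          wf n a d u v * ind (∃ l, l ∈ Icc u v ∧ ν l ∈ S ∪ T)
      ≤ (∑ u ∈ Ico 1 (n+1), ∑ v ∈ Ico (u+1) (n+1),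
          wf n a d u v * ind (∃ l, l ∈ Icc u v ∧ ν l ∈ S))
        + ∑ u ∈ Ico 1 (n+1), ∑ v ∈ Ico (u+1) (n+1),
          wf n a d u v * ind (∃ l, l ∈ Icc u v ∧ ν l ∈ T) := by
    rw [← Finset.sum_add_distrib, ← Finset.sum_add_distrib]
    apply Finset.sum_le_sum
    intro u hu
    rw [← Finset.sum_add_distrib, ← Finset.sum_add_distrib]
    apply Finset.sum_le_sum
    intro v hv
    rw [mem_Ico] at hu hv
    rw [← mul_add, ← mul_add]
    refine mul_le_mul_of_nonneg_left (ind_submod ?_ ?_)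
      (wf_nonneg hda hda' hu.1 (by omega) (by omega))
    · rintro ⟨l, hl, hm⟩
      rw [mem_inter] at hm
      exact ⟨⟨l, hl, hm.1⟩, ⟨l, hl, hm.2⟩⟩
    · rintro ⟨l, hl, hm⟩
      rw [mem_union] at hm
      exact hm.imp (fun h => ⟨l, hl, h⟩) (fun h => ⟨l, hl, h⟩)
  linarith

lemma gf_single (hinj : ∀ k ∈ Icc 1 n, ∀ l ∈ Icc 1 n, ν k = ν l → k = l)
    {k : ℕ} (hk1 : 1 ≤ k) (hk2 : k ≤ n) :
    gf n a d t ν {ν k} = t + a k := by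
  unfold gf
  have e1 : ind ({ν k} : Finset α).Nonempty = 1 :=
    ind_of ⟨ν k, Finset.mem_singleton_self _⟩
  have e2 : ∑ l ∈ Ico 1 (n+1), pf n a d l * ind (ν l ∈ ({ν k} : Finset α))
      = pf n a d k := by
    rw [Finset.sum_eq_single_of_mem k (by rw [mem_Ico]; omega)]
    · rw [ind_of (Finset.mem_singleton_self _), mul_one]
    · intro l hl hne
      rw [mem_Ico] at hl
      rw [ind_not, mul_zero]
      intro hm
      rw [Finset.mem_singleton] at hm
      exact hne (hinj l (by rw [mem_Icc]; omega) k (by rw [mem_Icc]; omega) hm)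
  have e3 : ∑ u ∈ Ico 1 (n+1), ∑ v ∈ Ico (u+1) (n+1),
      wf n a d u v * ind (∃ l, l ∈ Icc u v ∧ ν l ∈ ({ν k} : Finset α))
        = Lf n a d k := by
    have hpt : ∀ u ∈ Ico 1 (n+1), ∀ v ∈ Ico (u+1) (n+1),
        wf n a d u v * ind (∃ l, l ∈ Icc u v ∧ ν l ∈ ({ν k} : Finset α))
          = wf n a d u v * ind (u ≤ k ∧ k ≤ v) := by
      intro u hu v hv
      rw [mem_Ico] at hu hv
      have hiff : (∃ l, l ∈ Icc u v ∧ ν l ∈ ({ν k} : Finset α))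
          ↔ (u ≤ k ∧ k ≤ v) := by
        constructor
        · rintro ⟨l, hl, hm⟩
          rw [mem_Icc] at hl
          rw [Finset.mem_singleton] at hm
          have : l = k := hinj l (by rw [mem_Icc]; omega) k (by rw [mem_Icc]; omega) hm
          omega
        · rintro ⟨ha1, ha2⟩
          exact ⟨k, by rw [mem_Icc]; omega, Finset.mem_singleton_self _⟩
      rw [ind_congr hiff]
    rw [Finset.sum_congr rfl (fun u hu => Finset.sum_congr rfl (fun v hv =>
      hpt u hu v hv))]
    exact T1 hk1 hk2
  rw [e1, e2, e3]
  unfold pf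
  ring

lemma gf_pair [DecidableEq α] (hinj : ∀ k ∈ Icc 1 n, ∀ l ∈ Icc 1 n, ν k = ν l → k = l)
    {x y : ℕ} (hx : 1 ≤ x) (hxy : x < y) (hy : y ≤ n) :
    gf n a d t ν {ν x, ν y} = t + a x + a y - Mf n a d x y := by
  unfold gf
  have hmemx : ν x ∈ ({ν x, ν y} : Finset α) := Finset.mem_insert_self _ _
  have hmemy : ν y ∈ ({ν x, ν y} : Finset α) := by
    rw [Finset.mem_insert]; exact Or.inr (Finset.mem_singleton_self _)
  have hiff : ∀ l, 1 ≤ l → l ≤ n →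
      ((ν l ∈ ({ν x, ν y} : Finset α)) ↔ (l = x ∨ l = y)) := by
    intro l hl1 hl2
    constructor
    · intro hm
      rw [Finset.mem_insert, Finset.mem_singleton] at hm
      exact hm.imp
        (fun h => hinj l (by rw [mem_Icc]; omega) x (by rw [mem_Icc]; omega) h)
        (fun h => hinj l (by rw [mem_Icc]; omega) y (by rw [mem_Icc]; omega) h)
    · rintro (rfl | rfl)
      · exact hmemx
      · exact hmemy
  have e1 : ind ({ν x, ν y} : Finset α).Nonempty = 1 := ind_of ⟨ν x, hmemx⟩
  have e2 : ∑ l ∈ Ico 1 (n+1), pf n a d l * ind (ν l ∈ ({ν x, ν y} : Finset α))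
      = pf n a d x + pf n a d y := by
    have hpt : ∀ l ∈ Ico 1 (n+1), pf n a d l * ind (ν l ∈ ({ν x, ν y} : Finset α))
        = pf n a d l * ind (l = x) + pf n a d l * ind (l = y) := by
      intro l hl
      rw [mem_Ico] at hl
      rw [ind_congr (hiff l hl.1 (by omega)), ind_or, mul_sub, mul_add]
      have : ind (l = x ∧ l = y) = 0 := ind_not (by omega)
      rw [this, mul_zero, sub_zero]
    rw [Finset.sum_congr rfl hpt, Finset.sum_add_distrib]
    congr 1
    · rw [Finset.sum_eq_single_of_mem x (by rw [mem_Ico]; omega)]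
      · rw [ind_of rfl, mul_one]
      · intro l hl hne; rw [ind_not hne, mul_zero]
    · rw [Finset.sum_eq_single_of_mem y (by rw [mem_Ico]; omega)]
      · rw [ind_of rfl, mul_one]
      · intro l hl hne; rw [ind_not hne, mul_zero]
  have e3 : ∑ u ∈ Ico 1 (n+1), ∑ v ∈ Ico (u+1) (n+1),
      wf n a d u v * ind (∃ l, l ∈ Icc u v ∧ ν l ∈ ({ν x, ν y} : Finset α))
        = Lf n a d x + Lf n a d y - Mf n a d x y := by
    have hpt : ∀ u ∈ Ico 1 (n+1), ∀ v ∈ Ico (u+1) (n+1),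
        wf n a d u v * ind (∃ l, l ∈ Icc u v ∧ ν l ∈ ({ν x, ν y} : Finset α))
          = wf n a d u v * ind (u ≤ x ∧ x ≤ v) + wf n a d u v * ind (u ≤ y ∧ y ≤ v)
            - wf n a d u v * ind (u ≤ x ∧ y ≤ v) := by
      intro u hu v hv
      rw [mem_Ico] at hu hv
      have hcov : (∃ l, l ∈ Icc u v ∧ ν l ∈ ({ν x, ν y} : Finset α))
          ↔ ((u ≤ x ∧ x ≤ v) ∨ (u ≤ y ∧ y ≤ v)) := by
        constructor
        · rintro ⟨l, hl, hm⟩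
          rw [mem_Icc] at hl
          rcases (hiff l (by omega) (by omega)).mp hm with rfl | rfl
          · exact Or.inl ⟨hl.1, hl.2⟩
          · exact Or.inr ⟨hl.1, hl.2⟩
        · rintro (⟨ha1, ha2⟩ | ⟨ha1, ha2⟩)
          · exact ⟨x, by rw [mem_Icc]; omega, hmemx⟩
          · exact ⟨y, by rw [mem_Icc]; omega, hmemy⟩
      rw [ind_congr hcov, ind_or,
        ind_congr (show ((u ≤ x ∧ x ≤ v) ∧ (u ≤ y ∧ y ≤ v)) ↔ (u ≤ x ∧ y ≤ v) by
          constructor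
          · rintro ⟨⟨hb1, hb2⟩, ⟨hb3, hb4⟩⟩; exact ⟨hb1, hb4⟩
          · rintro ⟨hb1, hb4⟩; omega)]
      ring
    rw [Finset.sum_congr rfl (fun u hu => Finset.sum_congr rfl (fun v hv =>
      hpt u hu v hv))]
    have hsplit : ∀ u ∈ Ico 1 (n+1), ∑ v ∈ Ico (u+1) (n+1),
        (wf n a d u v * ind (u ≤ x ∧ x ≤ v) + wf n a d u v * ind (u ≤ y ∧ y ≤ v)
          - wf n a d u v * ind (u ≤ x ∧ y ≤ v))
        = (∑ v ∈ Ico (u+1) (n+1), wf n a d u v * ind (u ≤ x ∧ x ≤ v))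
          + (∑ v ∈ Ico (u+1) (n+1), wf n a d u v * ind (u ≤ y ∧ y ≤ v))
          - ∑ v ∈ Ico (u+1) (n+1), wf n a d u v * ind (u ≤ x ∧ y ≤ v) := by
      intro u hu
      rw [← Finset.sum_add_distrib, ← Finset.sum_sub_distrib]
    rw [Finset.sum_congr rfl hsplit, Finset.sum_sub_distrib, Finset.sum_add_distrib,
      T1 hx (by omega), T1 (show 1 ≤ y by omega) hy, T2 hx hxy hy]
  rw [e1, e2, e3]
  unfold pf
  ring

end GF

end Basic

end NCyc

/-- Every partial polymatroid on the n-cycle marginal scenario satisfying the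
cycle inequalities extends to a full polymatroid on `2^[n]`. -/
theorem ncycle_partial_polymatroid_extends {n : ℕ} (hn : 3 ≤ n)
    (f : Finset (Fin n) → ℝ)
    (h0 : f ∅ = 0)
    (h1 : ∀ i : Fin n, 0 ≤ f {i})
    (h2 : ∀ i : Fin n, f {i} ≤ f {i, i + ⟨1, by omega⟩})
    (h3 : ∀ i : Fin n, f {i + ⟨1, by omega⟩} ≤ f {i, i + ⟨1, by omega⟩})
    (h4 : ∀ i : Fin n, f {i, i + ⟨1, by omega⟩} ≤ f {i} + f {i + ⟨1, by omega⟩})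
    (h5 : ∀ i : Fin n,
      f {i, i + ⟨1, by omega⟩} + ∑ j ∈ Finset.univ \ {i, i + ⟨1, by omega⟩}, f {j}
        ≤ ∑ j ∈ Finset.univ \ {i}, f {j, j + ⟨1, by omega⟩}) :
    ∃ g : Finset (Fin n) → ℝ,
      g ∅ = 0 ∧ (∀ S, 0 ≤ g S) ∧
      (∀ S T : Finset (Fin n), S ⊆ T → g S ≤ g T) ∧
      (∀ S T : Finset (Fin n), g (S ∩ T) + g (S ∪ T) ≤ g S + g T) ∧
      (∀ i : Fin n, g {i} = f {i}) ∧
      (∀ i : Fin n, g {i, i + ⟨1, by omega⟩} = f {i, i + ⟨1, by omega⟩}) := by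
  open Fin.CommRing in
  classical
  have hn1 : 1 < n := by omega
  haveI : NeZero n := ⟨by omega⟩
  have hone : (⟨1, by omega⟩ : Fin n) = 1 := by
    apply Fin.ext
    rw [show ((1 : Fin n)) = ((1:ℕ) : Fin n) from (Nat.cast_one).symm,
      Fin.val_cast_of_lt hn1]
  simp only [hone] at h2 h3 h4 h5 ⊢
  set c : Fin n → ℝ := fun i => f {i} + f {i + 1} - f {i, i + 1} with hc
  obtain ⟨i0, -, hmin⟩ := Finset.exists_min_image Finset.univ c ⟨0, Finset.mem_univ 0⟩
  set t := c i0 with htdef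
  set ν : ℕ → Fin n := fun k => i0 + (k : Fin n) with hν
  set aa : ℕ → ℝ := fun k => f {ν k} - t with haa
  set dd : ℕ → ℝ := fun k => c (ν k) - t with hdd
  have h21 : ∀ i, c i ≤ f {i} := by
    intro i; have := h3 i; rw [hc]; dsimp only; linarith
  have h22 : ∀ i, c i ≤ f {i + 1} := by
    intro i; have := h2 i; rw [hc]; dsimp only; linarith
  have hc0 : ∀ i, 0 ≤ c i := by
    intro i; have := h4 i; rw [hc]; dsimp only; linarith
  have ht0 : 0 ≤ t := hc0 i0
  have htm : ∀ i, t ≤ c i := fun i => hmin i (Finset.mem_univ i)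
  have hν0 : ν 0 = i0 := by rw [hν]; simp
  have hνs : ∀ k : ℕ, ν (k+1) = ν k + 1 := by
    intro k; rw [hν]; dsimp only; push_cast; ring
  have hν1 : ν 1 = i0 + 1 := by rw [show (1:ℕ) = 0 + 1 from rfl, hνs, hν0]
  have hνn : ν n = i0 := by
    rw [hν]; dsimp only; rw [Fin.natCast_self, add_zero]
  have hd0 : ∀ j, 0 ≤ dd j := by
    intro j; rw [hdd]; dsimp only; have := htm (ν j); linarith
  have hda : ∀ j, dd j ≤ aa j := by
    intro j; rw [hdd, haa]; dsimp only; have := h21 (ν j); linarith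
  have hda' : ∀ j, dd j ≤ aa (j+1) := by
    intro j; rw [hdd, haa]; dsimp only
    have h := h22 (ν j)
    rw [← hνs j] at h
    linarith
  have ha0 : ∀ k, 0 ≤ aa k := by
    intro k; rw [haa]; dsimp only
    have := htm (ν k); have := h21 (ν k); linarith
  have hcast : ∀ k : ℕ, k < n → ((k : Fin n)).val = k := fun k hk => Fin.val_cast_of_lt hk
  have hinj : ∀ k ∈ Finset.Icc 1 n, ∀ l ∈ Finset.Icc 1 n, ν k = ν l → k = l := by
    intro k hk l hl he
    rw [Finset.mem_Icc] at hk hl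
    rw [hν] at he; dsimp only at he
    have he2 : ((k : Fin n)) = ((l : Fin n)) := add_left_cancel he
    by_cases hkn : k = n
    · by_cases hln : l = n
      · omega
      · exfalso
        rw [hkn, Fin.natCast_self] at he2
        have h := congrArg Fin.val he2.symm
        rw [hcast l (by omega)] at h
        simp at h
        omega
    · by_cases hln : l = n
      · exfalso
        rw [hln, Fin.natCast_self] at he2
        have h := congrArg Fin.val he2
        rw [hcast k (by omega)] at h
        simp at h
        omega
      · have h := congrArg Fin.val he2
        rw [hcast k (by omega), hcast l (by omega)] at h
        omega
  have hkey : ∀ i : Fin n, i ≠ i0 → (1 ≤ (i - i0).val ∧ (i - i0).val ≤ n - 1 ∧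
      ν ((i - i0).val) = i) := by
    intro i hi
    have hne : i - i0 ≠ 0 := sub_ne_zero_of_ne hi
    have hv0 : (i - i0).val ≠ 0 := by
      intro h
      exact hne (Fin.ext (by rw [h]; simp))
    refine ⟨by omega, by have := (i - i0).isLt; omega, ?_⟩
    rw [hν]; dsimp only
    rw [Fin.cast_val_eq_self (i - i0)]
    rw [add_comm, sub_add_cancel]
  have hne01 : i0 ≠ i0 + 1 := by
    intro h
    have h2' := left_eq_add.mp h
    have h := congrArg Fin.val h2'
    rw [show ((1 : Fin n)) = ((1:ℕ) : Fin n) from (Nat.cast_one).symm,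
      Fin.val_cast_of_lt hn1] at h
    simp at h
  have hSf : ∀ F : Fin n → ℝ, ∑ j ∈ Finset.range n, F (ν j) = ∑ i : Fin n, F i := by
    intro F
    rw [← Fin.sum_univ_eq_sum_range (fun j => F (ν j)) n]
    have hstep : ∀ i : Fin n, F (ν i.val) = F (i0 + i) := by
      intro i; rw [hν]; dsimp only; rw [Fin.cast_val_eq_self]
    rw [Finset.sum_congr rfl (fun i _ => hstep i)]
    exact Fintype.sum_equiv (Equiv.addLeft i0) _ _ (fun i => rfl)
  have hs1 : ∑ j ∈ Finset.Ico 1 n, c (ν j) = (∑ i : Fin n, c i) - t := by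
    have e1 : ∑ j ∈ Finset.range n, c (ν j)
        = c (ν 0) + ∑ j ∈ Finset.Ico 1 n, c (ν j) := by
      rw [Finset.range_eq_Ico]
      exact Finset.sum_eq_sum_Ico_succ_bot (by omega) _
    rw [hSf c, hν0, ← htdef] at e1
    linarith
  have hs2 : ∑ k ∈ Finset.Ico 2 n, f {ν k}
      = (∑ i : Fin n, f {i}) - f {i0} - f {i0 + 1} := by
    have e1 : ∑ j ∈ Finset.range n, f {ν j}
        = f {ν 0} + ∑ j ∈ Finset.Ico 1 n, f {ν j} := by
      rw [Finset.range_eq_Ico]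
      exact Finset.sum_eq_sum_Ico_succ_bot (by omega) _
    have e2 : ∑ j ∈ Finset.Ico 1 n, f {ν j}
        = f {ν 1} + ∑ j ∈ Finset.Ico 2 n, f {ν j} :=
      Finset.sum_eq_sum_Ico_succ_bot (by omega) _
    rw [hSf (fun i => f {i}), hν0] at e1
    rw [hν1] at e2
    linarith
  have hs3 : ∑ i : Fin n, f {i + 1} = ∑ i : Fin n, f {i} :=
    Fintype.sum_equiv (Equiv.addRight 1) _ _ (fun i => rfl)
  have hA : NCyc.Ef aa dd 1 n ≤ 0 := by
    have h5' := h5 i0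
    have hr1 : ∑ j ∈ Finset.univ \ {i0, i0 + 1}, f {j}
        = (∑ i : Fin n, f {i}) - (f {i0} + f {i0 + 1}) := by
      rw [Finset.sum_sdiff_eq_sub (Finset.subset_univ _), Finset.sum_pair hne01]
    have hr2 : ∑ j ∈ Finset.univ \ {i0}, f {j, j + 1}
        = (∑ j : Fin n, f {j, j + 1}) - f {i0, i0 + 1} := by
      rw [Finset.sum_sdiff_eq_sub (Finset.subset_univ _), Finset.sum_singleton]
    have hr3 : ∑ j : Fin n, f {j, j + 1}
        = (∑ i : Fin n, f {i}) + (∑ i : Fin n, f {i}) - ∑ i : Fin n, c i := by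
      have hpt : ∀ j : Fin n, f {j, j + 1} = f {j} + f {j + 1} - c j := by
        intro j; rw [hc]; dsimp only; ring
      rw [Finset.sum_congr rfl (fun j _ => hpt j), Finset.sum_sub_distrib,
        Finset.sum_add_distrib, hs3]
    have hfc : f {i0, i0 + 1} = f {i0} + f {i0 + 1} - t := by
      rw [htdef, hc]; dsimp only; ring
    rw [hr1, hr2, hr3, hfc] at h5'
    unfold NCyc.Ef
    have hsd : ∑ j ∈ Finset.Ico 1 n, dd j
        = ((∑ i : Fin n, c i) - t) - ((n:ℝ) - 1) * t := by
      rw [hdd]; dsimp only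
      rw [Finset.sum_sub_distrib, Finset.sum_const, Nat.card_Ico, hs1,
        nsmul_eq_mul]
      have hcst : ((n - 1 : ℕ) : ℝ) = (n:ℝ) - 1 := by
        have h1n : (1:ℕ) ≤ n := by omega
        push_cast [h1n]
        ring
      rw [hcst]
    have hsa : ∑ k ∈ Finset.Ico 2 n, aa k
        = ((∑ i : Fin n, f {i}) - f {i0} - f {i0 + 1}) - ((n:ℝ) - 2) * t := by
      rw [haa]; dsimp only
      rw [Finset.sum_sub_distrib, Finset.sum_const, Nat.card_Ico, hs2,
        nsmul_eq_mul]
      have hcst : ((n - 2 : ℕ) : ℝ) = (n:ℝ) - 2 := by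
        have h2n : (2:ℕ) ≤ n := by omega
        push_cast [h2n]
        ring
      rw [hcst]
    rw [show (1 + 1 : ℕ) = 2 from rfl, hsd, hsa]
    linarith
  refine ⟨NCyc.gf n aa dd t ν, NCyc.gf_empty, fun S => NCyc.gf_nonneg hn ht0 hd0 hda hda' S,
    fun S T hST => NCyc.gf_mono hn ht0 hd0 hda hda' hST,
    fun S T => NCyc.gf_submod hn ht0 hd0 hda hda' S T, ?_, ?_⟩
  · intro i
    by_cases hi : i = i0
    · rw [hi]
      have hg := NCyc.gf_single (n := n) (a := aa) (d := dd) (t := t) hinj (k := n) (by omega) le_rfl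
      rw [hνn] at hg
      rw [hg, haa]; dsimp only
      rw [hνn]; ring
    · obtain ⟨hk1, hk2, hνk⟩ := hkey i hi
      have hg := NCyc.gf_single (n := n) (a := aa) (d := dd) (t := t) hinj (k := (i - i0).val) hk1 (by omega)
      rw [hνk] at hg
      rw [hg, haa]; dsimp only
      rw [hνk]; ring
  · intro i
    by_cases hi : i = i0
    · rw [hi]
      have hg := NCyc.gf_pair (n := n) (a := aa) (d := dd) (t := t) hinj (x := 1) (y := n) le_rfl (by omega) le_rfl
      have hM : NCyc.Mf n aa dd 1 n = 0 := by
        rw [NCyc.Mf_eq le_rfl (by omega) le_rfl]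
        exact max_eq_left hA
      rw [hM, hν1, hνn, Finset.pair_comm] at hg
      rw [hg, haa]; dsimp only
      rw [hν1, hνn]
      have hfc : f {i0, i0 + 1} = f {i0} + f {i0 + 1} - t := by
        rw [htdef, hc]; dsimp only; ring
      rw [hfc]; ring
    · obtain ⟨hk1, hk2, hνk⟩ := hkey i hi
      set k := (i - i0).val with hkdef
      have hg := NCyc.gf_pair (n := n) (a := aa) (d := dd) (t := t) hinj (x := k) (y := k+1) hk1 (by omega) (by omega)
      have hM : NCyc.Mf n aa dd k (k+1) = dd k := NCyc.Mf_adj (hd0 k) hk1 (by omega)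
      rw [hM, hνk, hνs k, hνk] at hg
      rw [hg, haa, hdd]; dsimp only
      rw [hνk, hνs k, hνk]
      have hfc : f {i, i + 1} = f {i} + f {i + 1} - c i := by
        rw [hc]; dsimp only; ring
      rw [hfc]; ring
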